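/- Let n ≥ 3 be an integer, κ1, κ2, κ3, κ₋₁, κ₋ ≥ 0, and let (p, q, r) be the global solution of the ODE system with admissible initial data (p0, q0, r0) ∈ (0,∞)³. Then for all t ≥ 0, p(t) + q(t) + r(t) ≤ (p0 + q0 + r0) · exp(t · max{κ1 n, κ2}). -/

import Mathlib

open Set Filter Topology

/-- The right-hand side of the `p`-equation. -/
noncomputable def Fp (n : ℕ) (k1 k2 k3 km1 km p q r : ℝ) : ℝ :=
  (k1 - k3 * p) * (n * r - p - 2 * q)
    + km * q * (1 - (n - 1) * p / ((n - 2) * r)) - (k2 + km1) * p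

/-- The right-hand side of the `q`-equation. -/
noncomputable def Fq (n : ℕ) (k1 k2 k3 km1 km p q r : ℝ) : ℝ :=
  k2 * p + k3 * p * (n * r - p - 2 * q) - km * q

/-- The right-hand side of the `r`-equation. -/
noncomputable def Fr (n : ℕ) (k1 k2 k3 km1 km p q r : ℝ) : ℝ :=
  k2 * p - km * q * ((n * r - 2 * q) / ((n - 2) * r))

lemma alg1 (N k1 k2 k3 km1 km p q r : ℝ) (hr : (N-2)*r ≠ 0) :
    N * (k2*p - km*q*((N*r-2*q)/((N-2)*r)))
      - ((k1 - k3*p)*(N*r-p-2*q) + km*q*(1-(N-1)*p/((N-2)*r)) - (k2+km1)*p)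
      - 2*(k2*p + k3*p*(N*r-p-2*q) - km*q)
    = ((N-1)*k2+km1)*p + 2*(km*q/((N-2)*r))*(q-r)
      - (k1+k3*p+(N-1)*(km*q/((N-2)*r)))*(N*r-p-2*q) := by
  field_simp
  linear_combination (-(km*q)) * mul_inv_cancel₀ hr

lemma alg2 (N k1 k2 k3 km1 km p q r : ℝ) (hr : (N-2)*r ≠ 0) :
    (k2*p + k3*p*(N*r-p-2*q) - km*q) - (k2*p - km*q*((N*r-2*q)/((N-2)*r)))
    = k3*p*(N*r-p-2*q) - 2*(km*q/((N-2)*r))*(q-r) := by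
  field_simp
  linear_combination (q*km) * mul_inv_cancel₀ hr

lemma alg3 (N k1 k2 k3 km1 km p q r : ℝ) (hr : (N-2)*r ≠ 0) :
    ((k1 - k3*p)*(N*r-p-2*q) + km*q*(1-(N-1)*p/((N-2)*r)) - (k2+km1)*p)
      + (k2*p + k3*p*(N*r-p-2*q) - km*q)
      + (k2*p - km*q*((N*r-2*q)/((N-2)*r)))
    = k1*(N*r-p-2*q) + (k2-km1)*p - (km*q/((N-2)*r))*(N*p + (N*r-p-2*q)) := by
  field_simp
  ring

lemma deriv_nonpos_of_min_left {g : ℝ → ℝ} {g' t0 : ℝ} (ht0 : 0 < t0)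
    (hd : HasDerivAt g g' t0) (h0 : g t0 = 0) (hge : ∀ t ∈ Set.Ico 0 t0, 0 ≤ g t) :
    g' ≤ 0 := by
  have hdw : HasDerivWithinAt g g' (Set.Iio t0) t0 := hd.hasDerivWithinAt
  rw [hasDerivWithinAt_iff_tendsto_slope' (by simp)] at hdw
  have hne : (𝓝[<] t0).NeBot := nhdsLT_neBot t0
  refine le_of_tendsto hdw ?_
  filter_upwards [Ioo_mem_nhdsLT_of_mem (Set.mem_Ioc.2 ⟨ht0, le_refl t0⟩)] with t ht
  have : slope g t0 t = (g t - g t0) / (t - t0) := slope_def_field g t0 t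
  rw [this, h0, sub_zero]
  exact div_nonpos_of_nonneg_of_nonpos (hge t ⟨le_of_lt ht.1, ht.2⟩) (by linarith [ht.2])

set_option maxHeartbeats 2000000 in
/-- A priori exponential bound on the total size of the aggregate. -/
theorem stmt_1 (n : ℕ) (hn : 3 ≤ n) (k1 k2 k3 km1 km : ℝ)
    (hk1 : 0 ≤ k1) (hk2 : 0 ≤ k2) (hk3 : 0 ≤ k3) (hkm1 : 0 ≤ km1) (hkm : 0 ≤ km)
    (p0 q0 r0 : ℝ) (hp0 : 0 < p0) (hq0 : 0 < q0) (hr0 : 0 < r0)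
    (hadm1 : 0 ≤ (n : ℝ) * r0 - p0 - 2 * q0) (hadm2 : r0 ≤ q0)
    (p q r : ℝ → ℝ)
    (hinit : p 0 = p0 ∧ q 0 = q0 ∧ r 0 = r0)
    (hode : ∀ t, 0 ≤ t →
      HasDerivAt p (Fp n k1 k2 k3 km1 km (p t) (q t) (r t)) t ∧
      HasDerivAt q (Fq n k1 k2 k3 km1 km (p t) (q t) (r t)) t ∧
      HasDerivAt r (Fr n k1 k2 k3 km1 km (p t) (q t) (r t)) t)
    (hpos : ∀ t, 0 ≤ t → 0 < p t ∧ 0 < q t ∧ 0 < r t) :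
    ∀ t, 0 ≤ t →
      p t + q t + r t ≤ (p0 + q0 + r0) * Real.exp (t * max (k1 * n) k2) := by
  obtain ⟨hip, hiq, hir⟩ := hinit
  set N : ℝ := (n : ℝ) with hNdef
  have hN3 : (3:ℝ) ≤ N := by rw [hNdef]; exact_mod_cast hn
  have hN2 : (0:ℝ) < N - 2 := by linarith
  have hden : ∀ t, 0 ≤ t → (N - 2) * r t ≠ 0 := fun t ht =>
    ne_of_gt (mul_pos hN2 (hpos t ht).2.2)
  set x : ℝ → ℝ := fun t => N * r t - p t - 2 * q t with hxdef
  set y : ℝ → ℝ := fun t => q t - r t with hydef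
  set c : ℝ → ℝ := fun t => km * q t / ((N - 2) * r t) with hcdef
  have hc0 : ∀ t, 0 ≤ t → 0 ≤ c t := by
    intro t ht
    exact div_nonneg (mul_nonneg hkm (hpos t ht).2.1.le)
      (mul_pos hN2 (hpos t ht).2.2).le
  -- derivative of x
  have hx' : ∀ t, 0 ≤ t → HasDerivAt x
      (((N-1)*k2+km1)*(p t) + 2*(c t)*(y t) - (k1+k3*(p t)+(N-1)*(c t))*(x t)) t := by
    intro t ht
    obtain ⟨hdp, hdq, hdr⟩ := hode t ht
    have h := ((hdr.const_mul N).sub hdp).sub (hdq.const_mul 2)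
    have e : N * Fr n k1 k2 k3 km1 km (p t) (q t) (r t)
        - Fp n k1 k2 k3 km1 km (p t) (q t) (r t)
        - 2 * Fq n k1 k2 k3 km1 km (p t) (q t) (r t)
        = ((N-1)*k2+km1)*(p t) + 2*(c t)*(y t) - (k1+k3*(p t)+(N-1)*(c t))*(x t) := by
      simp only [Fp, Fq, Fr, hcdef, hxdef, hydef, ← hNdef]
      exact alg1 N k1 k2 k3 km1 km (p t) (q t) (r t) (hden t ht)
    rw [e] at h
    exact h
  -- derivative of y
  have hy' : ∀ t, 0 ≤ t → HasDerivAt y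
      (k3*(p t)*(x t) - 2*(c t)*(y t)) t := by
    intro t ht
    obtain ⟨hdp, hdq, hdr⟩ := hode t ht
    have h := hdq.sub hdr
    have e : Fq n k1 k2 k3 km1 km (p t) (q t) (r t)
        - Fr n k1 k2 k3 km1 km (p t) (q t) (r t)
        = k3*(p t)*(x t) - 2*(c t)*(y t) := by
      simp only [Fq, Fr, hcdef, hxdef, hydef, ← hNdef]
      exact alg2 N k1 k2 k3 km1 km (p t) (q t) (r t) (hden t ht)
    rw [e] at h
    exact h
  have hx0 : 0 ≤ x 0 := by simp only [hxdef, hip, hiq, hir]; exact hadm1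
  have hy0 : 0 ≤ y 0 := by simp only [hydef, hiq, hir]; linarith
  -- invariance of the admissible region
  have hinv : ∀ t, 0 ≤ t → 0 ≤ x t ∧ 0 ≤ y t := by
    intro t1 ht1
    rcases eq_or_lt_of_le ht1 with h0 | h0
    · rw [← h0]; exact ⟨hx0, hy0⟩
    -- continuity on [0, t1]
    have hcp : ContinuousOn p (Icc 0 t1) := fun s hs =>
      ((hode s hs.1).1.continuousAt).continuousWithinAt
    have hcq : ContinuousOn q (Icc 0 t1) := fun s hs =>
      ((hode s hs.1).2.1.continuousAt).continuousWithinAt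
    have hcr : ContinuousOn r (Icc 0 t1) := fun s hs =>
      ((hode s hs.1).2.2.continuousAt).continuousWithinAt
    have hcc : ContinuousOn c (Icc 0 t1) := by
      refine (continuousOn_const.mul hcq).div (continuousOn_const.mul hcr) ?_
      exact fun s hs => hden s hs.1
    have hcx : ContinuousOn x (Icc 0 t1) :=
      ((continuousOn_const.mul hcr).sub hcp).sub (continuousOn_const.mul hcq)
    have hcy : ContinuousOn y (Icc 0 t1) := hcq.sub hcr
    -- bound L on the coefficients
    obtain ⟨C, hC⟩ := (isCompact_Icc (a := (0:ℝ)) (b := t1)).exists_bound_of_continuousOn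
      (f := fun s => |c s| + |k1 + k3 * p s + (N-1) * c s| + |k3 * p s|)
      (((hcc.abs).add (((continuousOn_const.add
        (continuousOn_const.mul hcp)).add (continuousOn_const.mul hcc)).abs)).add
        ((continuousOn_const.mul hcp).abs))
    set L : ℝ := max C 1 with hLdef
    have hL1 : (1:ℝ) ≤ L := le_max_right _ _
    have hL0 : (0:ℝ) < L := by linarith
    have habs : ∀ s ∈ Icc (0:ℝ) t1,
        c s ≤ L ∧ k1 + k3 * p s + (N-1) * c s ≤ L ∧ k3 * p s ≤ L := by
      intro s hs
      have h1 := hC s hs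
      rw [Real.norm_eq_abs] at h1
      have h2 := le_abs_self (|c s| + |k1 + k3 * p s + (N-1) * c s| + |k3 * p s|)
      have hCL : C ≤ L := le_max_left _ _
      refine ⟨?_, ?_, ?_⟩
      · have := le_abs_self (c s)
        have := abs_nonneg (k1 + k3 * p s + (N-1) * c s)
        have := abs_nonneg (k3 * p s)
        linarith
      · have := le_abs_self (k1 + k3 * p s + (N-1) * c s)
        have := abs_nonneg (c s)
        have := abs_nonneg (k3 * p s)
        linarith
      · have := le_abs_self (k3 * p s)
        have := abs_nonneg (c s)
        have := abs_nonneg (k1 + k3 * p s + (N-1) * c s)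
        linarith
    -- the key claim: the perturbed quantities stay positive
    have claim : ∀ ε : ℝ, 0 < ε → ∀ s ∈ Icc (0:ℝ) t1,
        0 < x s + ε * Real.exp (3*L*s) ∧ 0 < y s + ε * Real.exp (3*L*s) := by
      intro ε hε
      by_contra hbad
      push_neg at hbad
      obtain ⟨s0, hs0mem, hs0⟩ := hbad
      have hBne : ∃ s ∈ Icc (0:ℝ) t1,
          x s + ε * Real.exp (3*L*s) ≤ 0 ∨ y s + ε * Real.exp (3*L*s) ≤ 0 := by
        rcases le_or_gt (x s0 + ε * Real.exp (3*L*s0)) 0 with h | h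
        · exact ⟨s0, hs0mem, Or.inl h⟩
        · exact ⟨s0, hs0mem, Or.inr (hs0 h)⟩
      set B : Set ℝ := {s | s ∈ Icc (0:ℝ) t1 ∧
        (x s + ε * Real.exp (3*L*s) ≤ 0 ∨ y s + ε * Real.exp (3*L*s) ≤ 0)} with hBdef
      have hBsub : B ⊆ Icc 0 t1 := fun s hs => hs.1
      have hBne' : B.Nonempty := by
        obtain ⟨s, hs1, hs2⟩ := hBne; exact ⟨s, hs1, hs2⟩
      have hexpc : ContinuousOn (fun s : ℝ => ε * Real.exp (3*L*s)) (Icc 0 t1) := by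
        fun_prop
      have hgx : ContinuousOn (fun s => x s + ε * Real.exp (3*L*s)) (Icc 0 t1) :=
        hcx.add hexpc
      have hgy : ContinuousOn (fun s => y s + ε * Real.exp (3*L*s)) (Icc 0 t1) :=
        hcy.add hexpc
      have hBclosed : IsClosed B := by
        have e : B = (Icc 0 t1 ∩ (fun s => x s + ε * Real.exp (3*L*s)) ⁻¹' (Iic 0))
            ∪ (Icc 0 t1 ∩ (fun s => y s + ε * Real.exp (3*L*s)) ⁻¹' (Iic 0)) := by
          ext s
          simp only [hBdef, Set.mem_setOf_eq, Set.mem_union, Set.mem_inter_iff,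
            Set.mem_preimage, Set.mem_Iic]
          tauto
        rw [e]
        exact (hgx.preimage_isClosed_of_isClosed isClosed_Icc isClosed_Iic).union
          (hgy.preimage_isClosed_of_isClosed isClosed_Icc isClosed_Iic)
      have hBbdd : BddBelow B := (bddBelow_Icc).mono hBsub
      set t0 : ℝ := sInf B with ht0def
      have ht0B : t0 ∈ B := hBclosed.csInf_mem hBne' hBbdd
      have ht0mem : t0 ∈ Icc (0:ℝ) t1 := ht0B.1
      have ht0pos : 0 < t0 := by
        rcases eq_or_lt_of_le ht0mem.1 with h | h
        · exfalso
          have h2 := ht0B.2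
          rw [← h] at h2
          simp only [mul_zero, Real.exp_zero, mul_one] at h2
          rcases h2 with h2 | h2 <;> linarith
        · exact h
      have hbefore : ∀ s ∈ Ico (0:ℝ) t0,
          0 < x s + ε * Real.exp (3*L*s) ∧ 0 < y s + ε * Real.exp (3*L*s) := by
        intro s hs
        have hsnotB : s ∉ B := fun hmem => absurd (csInf_le hBbdd hmem) (not_le.2 hs.2)
        have hsmem : s ∈ Icc (0:ℝ) t1 := ⟨hs.1, le_trans hs.2.le ht0mem.2⟩
        by_contra hcon
        push_neg at hcon
        apply hsnotB
        rcases le_or_gt (x s + ε * Real.exp (3*L*s)) 0 with h | h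
        · exact ⟨hsmem, Or.inl h⟩
        · exact ⟨hsmem, Or.inr (hcon h)⟩
      set E : ℝ := Real.exp (3*L*t0) with hEdef
      have hE0 : 0 < E := Real.exp_pos _
      have hεE : 0 < ε * E := mul_pos hε hE0
      obtain ⟨hdp0, hdq0, hdr0⟩ := hode t0 ht0mem.1
      have hctx : ContinuousAt x t0 :=
        ((continuousAt_const.mul hdr0.continuousAt).sub hdp0.continuousAt).sub
          (continuousAt_const.mul hdq0.continuousAt)
      have hcty : ContinuousAt y t0 := hdq0.continuousAt.sub hdr0.continuousAt
      have hctE : ContinuousAt (fun s : ℝ => ε * Real.exp (3*L*s)) t0 := by fun_prop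
      have hIoo : Ioo 0 t0 ∈ 𝓝[<] t0 :=
        Ioo_mem_nhdsLT_of_mem (Set.mem_Ioc.2 ⟨ht0pos, le_refl t0⟩)
      have hxge : 0 ≤ x t0 + ε * E := by
        have htd : Tendsto (fun s => x s + ε * Real.exp (3*L*s)) (𝓝[<] t0)
            (𝓝 (x t0 + ε * E)) :=
          ((hctx.add hctE).tendsto).mono_left nhdsWithin_le_nhds
        refine ge_of_tendsto htd ?_
        filter_upwards [hIoo] with s hs
        exact (hbefore s ⟨hs.1.le, hs.2⟩).1.le
      have hyge : 0 ≤ y t0 + ε * E := by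
        have htd : Tendsto (fun s => y s + ε * Real.exp (3*L*s)) (𝓝[<] t0)
            (𝓝 (y t0 + ε * E)) :=
          ((hcty.add hctE).tendsto).mono_left nhdsWithin_le_nhds
        refine ge_of_tendsto htd ?_
        filter_upwards [hIoo] with s hs
        exact (hbefore s ⟨hs.1.le, hs.2⟩).2.le
      obtain ⟨hcL, hBL, hk3L⟩ := habs t0 ht0mem
      have hct0 : 0 ≤ c t0 := hc0 t0 ht0mem.1
      have hpt0 : 0 < p t0 := (hpos t0 ht0mem.1).1
      have hdexp : HasDerivAt (fun s : ℝ => ε * Real.exp (3*L*s))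
          (ε * (Real.exp (3*L*t0) * (3*L))) t0 := by
        have h1 : HasDerivAt (fun s : ℝ => 3*L*s) (3*L) t0 := by
          simpa using (hasDerivAt_id t0).const_mul (3*L)
        exact ((Real.hasDerivAt_exp (3*L*t0)).comp t0 h1).const_mul ε
      rcases ht0B.2 with hcase | hcase
      · -- x hits the barrier first
        have hx0eq : x t0 + ε * E = 0 := le_antisymm hcase hxge
        have hgd : HasDerivAt (fun s => x s + ε * Real.exp (3*L*s))
            ((((N-1)*k2+km1)*(p t0) + 2*(c t0)*(y t0)
              - (k1+k3*(p t0)+(N-1)*(c t0))*(x t0))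
              + ε * (Real.exp (3*L*t0) * (3*L))) t0 :=
          (hx' t0 ht0mem.1).add hdexp
        have hd0 := deriv_nonpos_of_min_left ht0pos hgd hx0eq
          (fun s hs => (hbefore s hs).1.le)
        have hA : 0 ≤ ((N-1)*k2+km1) * p t0 :=
          mul_nonneg (by nlinarith) hpt0.le
        have hxval : x t0 = -(ε*E) := by linarith
        have hyval : -(ε*E) ≤ y t0 := by linarith
        have hB0 : 0 ≤ k1+k3*(p t0)+(N-1)*(c t0) := by
          have : 0 ≤ (N-1)*(c t0) := mul_nonneg (by linarith) hct0
          nlinarith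
        rw [hxval] at hd0
        nlinarith [mul_le_mul_of_nonneg_left hyval hct0,
          mul_le_mul_of_nonneg_right hcL hεE.le,
          mul_nonneg hB0 hεE.le,
          mul_pos hL0 hεE]
      · -- y hits the barrier first
        have hy0eq : y t0 + ε * E = 0 := le_antisymm hcase hyge
        have hgd : HasDerivAt (fun s => y s + ε * Real.exp (3*L*s))
            ((k3*(p t0)*(x t0) - 2*(c t0)*(y t0))
              + ε * (Real.exp (3*L*t0) * (3*L))) t0 :=
          (hy' t0 ht0mem.1).add hdexp
        have hd0 := deriv_nonpos_of_min_left ht0pos hgd hy0eq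
          (fun s hs => (hbefore s hs).2.le)
        have hyval : y t0 = -(ε*E) := by linarith
        have hxval : -(ε*E) ≤ x t0 := by linarith
        have hk3p0 : 0 ≤ k3 * p t0 := mul_nonneg hk3 hpt0.le
        rw [hyval] at hd0
        nlinarith [mul_le_mul_of_nonneg_left hxval hk3p0,
          mul_le_mul_of_nonneg_right hk3L hεE.le,
          mul_nonneg hct0 hεE.le,
          mul_pos hL0 hεE]
    -- let ε → 0
    have ht1mem : t1 ∈ Icc (0:ℝ) t1 := ⟨ht1, le_refl t1⟩
    constructor
    · by_contra hneg
      push_neg at hneg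
      have hεpos : 0 < -(x t1) / Real.exp (3*L*t1) :=
        div_pos (by linarith) (Real.exp_pos _)
      have h := (claim _ hεpos t1 ht1mem).1
      rw [div_mul_cancel₀ _ (Real.exp_pos (3*L*t1)).ne'] at h
      linarith
    · by_contra hneg
      push_neg at hneg
      have hεpos : 0 < -(y t1) / Real.exp (3*L*t1) :=
        div_pos (by linarith) (Real.exp_pos _)
      have h := (claim _ hεpos t1 ht1mem).2
      rw [div_mul_cancel₀ _ (Real.exp_pos (3*L*t1)).ne'] at h
      linarith
  -- Gronwall step
  set M : ℝ := max (k1 * N) k2 with hMdef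
  have hM0 : 0 ≤ M := le_trans hk2 (le_max_right _ _)
  have hS' : ∀ t, 0 ≤ t → HasDerivAt (fun t => p t + q t + r t)
      (k1*(x t) + (k2-km1)*(p t) - (c t)*(N*(p t) + x t)) t := by
    intro t ht
    obtain ⟨hdp, hdq, hdr⟩ := hode t ht
    have h := (hdp.add hdq).add hdr
    have e : Fp n k1 k2 k3 km1 km (p t) (q t) (r t)
        + Fq n k1 k2 k3 km1 km (p t) (q t) (r t)
        + Fr n k1 k2 k3 km1 km (p t) (q t) (r t)
        = k1*(x t) + (k2-km1)*(p t) - (c t)*(N*(p t) + x t) := by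
      simp only [Fp, Fq, Fr, hcdef, hxdef, ← hNdef]
      exact alg3 N k1 k2 k3 km1 km (p t) (q t) (r t) (hden t ht)
    rw [e] at h
    exact h
  have hSle : ∀ t, 0 ≤ t →
      k1*(x t) + (k2-km1)*(p t) - (c t)*(N*(p t) + x t) ≤ M * (p t + q t + r t) := by
    intro t ht
    obtain ⟨hpt, hqt, hrt⟩ := hpos t ht
    obtain ⟨hxt, hyt⟩ := hinv t ht
    have hxle : x t ≤ N * r t := by
      simp only [hxdef]; linarith
    have h1 : k1 * x t ≤ M * r t :=
      calc k1 * x t ≤ k1 * (N * r t) := mul_le_mul_of_nonneg_left hxle hk1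
      _ = (k1 * N) * r t := by ring
      _ ≤ M * r t := mul_le_mul_of_nonneg_right (le_max_left _ _) hrt.le
    have h2 : (k2 - km1) * p t ≤ M * p t := by
      have hk2M : k2 ≤ M := le_max_right _ _
      nlinarith
    have h3 : 0 ≤ (c t) * (N * p t + x t) :=
      mul_nonneg (hc0 t ht) (by nlinarith)
    have h4 : 0 ≤ M * q t := mul_nonneg hM0 hqt.le
    linarith
  set g : ℝ → ℝ := fun t => (p t + q t + r t) * Real.exp (-(M * t)) with hgdef
  have hgd : ∀ t, 0 ≤ t → HasDerivAt g
      ((k1*(x t) + (k2-km1)*(p t) - (c t)*(N*(p t) + x t)) * Real.exp (-(M*t))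
        + (p t + q t + r t) * (Real.exp (-(M*t)) * (-M))) t := by
    intro t ht
    have hde : HasDerivAt (fun s : ℝ => Real.exp (-(M*s))) (Real.exp (-(M*t)) * (-M)) t := by
      have h1 : HasDerivAt (fun s : ℝ => -(M*s)) (-M) t := by
        simpa using (hasDerivAt_id t).const_mul (-M)
      exact (Real.hasDerivAt_exp _).comp t h1
    exact (hS' t ht).mul hde
  have hgcont : ContinuousOn g (Ici 0) := by
    intro s hs
    obtain ⟨hdp, hdq, hdr⟩ := hode s hs
    have hce : Continuous fun s : ℝ => Real.exp (-(M*s)) := by fun_prop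
    exact (((hdp.continuousAt.add hdq.continuousAt).add hdr.continuousAt).mul
      hce.continuousAt).continuousWithinAt
  have hanti : AntitoneOn g (Ici 0) := by
    apply antitoneOn_of_deriv_nonpos (convex_Ici 0) hgcont
    · intro s hs
      rw [interior_Ici] at hs
      exact (hgd s (le_of_lt hs)).differentiableAt.differentiableWithinAt
    · intro s hs
      rw [interior_Ici] at hs
      rw [(hgd s (le_of_lt hs)).deriv]
      have hle := hSle s (le_of_lt hs)
      have hE := Real.exp_pos (-(M*s))
      nlinarith [mul_le_mul_of_nonneg_right hle hE.le]
  intro t ht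
  have h := hanti (self_mem_Ici) (mem_Ici.2 ht) ht
  simp only [hgdef, mul_zero, neg_zero, Real.exp_zero, mul_one, hip, hiq, hir] at h
  have hkey := mul_le_mul_of_nonneg_right h (Real.exp_pos (M*t)).le
  rw [mul_assoc, ← Real.exp_add, neg_add_cancel, Real.exp_zero, mul_one] at hkey
  rw [mul_comm t M]
  exact hkey
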